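/- For T > 0 and θ ∈ ℝ, the vector ∂φ/∂t(T,θ) is a positive scalar multiple of φ(T,θ) if and only if coth T = 2 tanh(2T), where φ(t,θ) = (2 sinh t cos θ, 2 sinh t sin θ, cosh 2t cos 2θ, cosh 2t sin 2θ). -/
import Mathlib


/-- The parametrization of the critical Möbius band. -/
noncomputable def phiCMB (t θ : ℝ) : Fin 4 → ℝ :=
  ![2 * Real.sinh t * Real.cos θ, 2 * Real.sinh t * Real.sin θ,
    Real.cosh (2 * t) * Real.cos (2 * θ), Real.cosh (2 * t) * Real.sin (2 * θ)]

lemma derivA (T a : ℝ) : deriv (fun s => 2 * Real.sinh s * a) T = 2 * Real.cosh T * a :=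
  (((Real.hasDerivAt_sinh T).const_mul 2).mul_const _).deriv

lemma derivB (T a : ℝ) : deriv (fun s => Real.cosh (2 * s) * a) T
    = 2 * Real.sinh (2 * T) * a := by
  have h2 : HasDerivAt (fun s : ℝ => 2 * s) (2 * 1) T := (hasDerivAt_id T).const_mul 2
  have h : HasDerivAt (fun s => Real.cosh (2 * s)) (Real.sinh (2 * T) * (2 * 1)) T :=
    (Real.hasDerivAt_cosh (2 * T)).comp T h2
  have := (h.mul_const a).deriv
  rw [this]; ring

/-- For `T > 0`, `∂φ/∂t(T,θ)` is a positive multiple of `φ(T,θ)` iff `coth T = 2 tanh 2T`. -/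
theorem stmt_6 (T θ : ℝ) (hT : 0 < T) :
    (∃ c : ℝ, 0 < c ∧ ∀ i : Fin 4, deriv (fun s => phiCMB s θ i) T = c * phiCMB T θ i) ↔
      Real.cosh T / Real.sinh T = 2 * Real.tanh (2 * T) := by
  have hs : Real.sinh T ≠ 0 := ne_of_gt (Real.sinh_pos_iff.mpr hT)
  have hc2 : Real.cosh (2 * T) ≠ 0 := ne_of_gt (Real.cosh_pos (2*T))
  have hpy : Real.cos θ ^ 2 + Real.sin θ ^ 2 = 1 := by
    rw [add_comm]; exact Real.sin_sq_add_cos_sq θ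
  have hpy2 : Real.cos (2 * θ) ^ 2 + Real.sin (2 * θ) ^ 2 = 1 := by
    rw [add_comm]; exact Real.sin_sq_add_cos_sq (2 * θ)
  constructor
  · rintro ⟨c, hc, heq⟩
    have e0 := heq 0
    have e1 := heq 1
    have e2 := heq 2
    have e3 := heq 3
    simp only [phiCMB, Matrix.cons_val_zero, Matrix.cons_val_one, Matrix.head_cons,
      Matrix.cons_val_two, Matrix.tail_cons, Matrix.cons_val_three, derivA, derivB] at e0 e1 e2 e3
    have h0 : 2 * Real.cosh T * Real.cos θ * Real.cos θ
        = c * (2 * Real.sinh T * Real.cos θ) * Real.cos θ := by rw [e0]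
    have h1 : 2 * Real.cosh T * Real.sin θ * Real.sin θ
        = c * (2 * Real.sinh T * Real.sin θ) * Real.sin θ := by rw [e1]
    have h2 : 2 * Real.sinh (2 * T) * Real.cos (2 * θ) * Real.cos (2 * θ)
        = c * (Real.cosh (2 * T) * Real.cos (2 * θ)) * Real.cos (2 * θ) := by rw [e2]
    have h3 : 2 * Real.sinh (2 * T) * Real.sin (2 * θ) * Real.sin (2 * θ)
        = c * (Real.cosh (2 * T) * Real.sin (2 * θ)) * Real.sin (2 * θ) := by rw [e3]
    have k1 : Real.cosh T = c * Real.sinh T := by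
      linear_combination (1/2) * h0 + (1/2) * h1 + (c * Real.sinh T - Real.cosh T) * hpy
    have k2 : 2 * Real.sinh (2 * T) = c * Real.cosh (2 * T) := by
      linear_combination h2 + h3 + (c * Real.cosh (2 * T) - 2 * Real.sinh (2 * T)) * hpy2
    rw [Real.tanh_eq_sinh_div_cosh]
    rw [k1]
    field_simp
    linarith [k2]
  · intro h
    refine ⟨Real.cosh T / Real.sinh T, div_pos (Real.cosh_pos T) (Real.sinh_pos_iff.mpr hT), ?_⟩
    have k1 : Real.cosh T = Real.cosh T / Real.sinh T * Real.sinh T := by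
      field_simp
    have k2 : 2 * Real.sinh (2 * T) = Real.cosh T / Real.sinh T * Real.cosh (2 * T) := by
      rw [h, Real.tanh_eq_sinh_div_cosh]
      field_simp
    intro i
    fin_cases i
    · show deriv (fun s => 2 * Real.sinh s * Real.cos θ) T
        = Real.cosh T / Real.sinh T * (2 * Real.sinh T * Real.cos θ)
      rw [derivA]; linear_combination 2 * Real.cos θ * k1
    · show deriv (fun s => 2 * Real.sinh s * Real.sin θ) T
        = Real.cosh T / Real.sinh T * (2 * Real.sinh T * Real.sin θ)
      rw [derivA]; linear_combination 2 * Real.sin θ * k1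
    · show deriv (fun s => Real.cosh (2 * s) * Real.cos (2 * θ)) T
        = Real.cosh T / Real.sinh T * (Real.cosh (2 * T) * Real.cos (2 * θ))
      rw [derivB]; linear_combination Real.cos (2 * θ) * k2
    · show deriv (fun s => Real.cosh (2 * s) * Real.sin (2 * θ)) T
        = Real.cosh T / Real.sinh T * (Real.cosh (2 * T) * Real.sin (2 * θ))
      rw [derivB]; linear_combination Real.sin (2 * θ) * k2
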